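/- arXiv:1602.00309 — 2 statements merged into one kernel-verified Lean document; each statement's English description precedes it below -/
import Mathlib

section
/- Let N ≥ 1, β ∈ (0,1), and ε ≥ 0. Let γ ∈ [0,1]^N and let γ̂ ∈ ℝ^N satisfy γ̂_i ≥ 0 for all i, γ̂ ≠ 0, and |γ̂_i − γ_i| ≤ ε for all i. Define the plug-in allocation m̂_i = γ̂_i^{1/(1-β)} / ∑_{j=1}^N γ̂_j^{1/(1-β)}. Then (∑_{i=1}^N γ_i^{1/(1-β)})^{1-β} − ∑_{i=1}^N γ_i m̂_i^β ≤ 2Nε. That is, allocating optimally for the estimated parameters γ̂ incurs instantaneous expected regret at most 2Nε under the true parameters γ. -/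
open Finset

/-- Estimation-error-to-regret bound: if `|γ̂_i − γ_i| ≤ ε` for all `i`
(`γ ∈ [0,1]^N`, `γ̂ ≥ 0`, `γ̂ ≠ 0`, `β ∈ (0,1)`), then allocating optimally
for `γ̂` via `m̂_i = γ̂_i^{1/(1-β)} / ∑_j γ̂_j^{1/(1-β)}` incurs instantaneous
expected regret at most `2Nε` under the true parameters `γ`. -/
theorem stmt12 (N : ℕ) (hN : 1 ≤ N) (β : ℝ) (hβ : β ∈ Set.Ioo (0 : ℝ) 1)
    (ε : ℝ) (hε : 0 ≤ ε)
    (γ : Fin N → ℝ) (hγ : ∀ i, γ i ∈ Set.Icc (0 : ℝ) 1)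
    (γhat : Fin N → ℝ) (hγhat0 : ∀ i, 0 ≤ γhat i) (hγhatne : γhat ≠ 0)
    (hclose : ∀ i, |γhat i - γ i| ≤ ε)
    (mhat : Fin N → ℝ)
    (hmhat : ∀ i, mhat i = γhat i ^ (1 / (1 - β)) / ∑ j, γhat j ^ (1 / (1 - β))) :
    (∑ i, γ i ^ (1 / (1 - β))) ^ (1 - β) - ∑ i, γ i * mhat i ^ β
      ≤ 2 * N * ε := by
  obtain ⟨hβ0, hβ1⟩ := hβ
  have h1β : (0:ℝ) < 1 - β := by linarith
  set c : ℝ := 1 / (1 - β) with hc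
  have hcpos : 0 < c := by positivity
  have hc1 : 1 ≤ c := by
    rw [hc, le_div_iff₀ h1β]; linarith
  have hcβ : 1 + c * β = c := by
    have h' : c * (1 - β) = 1 := by rw [hc]; exact one_div_mul_cancel h1β.ne'
    linear_combination -h'
  have hc1β : c * (1 - β) = 1 := by
    rw [hc]; exact one_div_mul_cancel h1β.ne'
  set S : ℝ := ∑ j, γhat j ^ c with hS
  have hSterm : ∀ j, (0:ℝ) ≤ γhat j ^ c := fun j => Real.rpow_nonneg (hγhat0 j) c
  have hSpos : 0 < S := by
    obtain ⟨i, hi⟩ : ∃ i, γhat i ≠ 0 := by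
      by_contra h
      push_neg at h
      exact hγhatne (funext h)
    have hi' : 0 < γhat i := lt_of_le_of_ne (hγhat0 i) (Ne.symm hi)
    have : 0 < γhat i ^ c := Real.rpow_pos_of_pos hi' c
    calc (0:ℝ) < γhat i ^ c := this
      _ ≤ S := Finset.single_le_sum (fun j _ => hSterm j) (mem_univ i)
  -- properties of mhat
  have hm0 : ∀ i, 0 ≤ mhat i := by
    intro i; rw [hmhat i]; exact div_nonneg (hSterm i) hSpos.le
  have hm1 : ∀ i, mhat i ≤ 1 := by
    intro i; rw [hmhat i, div_le_one hSpos]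
    exact Finset.single_le_sum (fun j _ => hSterm j) (mem_univ i)
  have hmβ1 : ∀ i, mhat i ^ β ≤ 1 := fun i =>
    Real.rpow_le_one (hm0 i) (hm1 i) hβ0.le
  have hmβ0 : ∀ i, 0 ≤ mhat i ^ β := fun i => Real.rpow_nonneg (hm0 i) β
  -- key identity : ∑ γ̂ i * mhat i ^ β = S ^ (1 - β)
  have hkey : ∑ i, γhat i * mhat i ^ β = S ^ (1 - β) := by
    have : ∀ i, γhat i * mhat i ^ β = γhat i ^ c / S ^ β := by
      intro i
      rw [hmhat i, Real.div_rpow (hSterm i) hSpos.le, ← Real.rpow_mul (hγhat0 i),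
        ← mul_div_assoc]
      congr 1
      nth_rewrite 1 [← Real.rpow_one (γhat i)]
      rw [← Real.rpow_add_of_nonneg (hγhat0 i) zero_le_one
        (by positivity : (0:ℝ) ≤ c * β), hcβ]
    rw [Finset.sum_congr rfl (fun i _ => this i), ← Finset.sum_div,
      Real.rpow_sub hSpos, Real.rpow_one]
  -- lower bound on realized reward
  have hlow : S ^ (1 - β) - N * ε ≤ ∑ i, γ i * mhat i ^ β := by
    have h1 : ∀ i, γhat i * mhat i ^ β - ε ≤ γ i * mhat i ^ β := by
      intro i
      have hγi : γhat i - ε ≤ γ i := by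
        have := abs_le.mp (hclose i)
        linarith [this.1]
      calc γhat i * mhat i ^ β - ε
          ≤ γhat i * mhat i ^ β - ε * mhat i ^ β := by
            nlinarith [hmβ1 i, hmβ0 i]
        _ = (γhat i - ε) * mhat i ^ β := by ring
        _ ≤ γ i * mhat i ^ β := mul_le_mul_of_nonneg_right hγi (hmβ0 i)
    calc S ^ (1 - β) - N * ε = ∑ i, (γhat i * mhat i ^ β - ε) := by
          rw [Finset.sum_sub_distrib, hkey, Finset.sum_const, card_univ,
            Fintype.card_fin, nsmul_eq_mul]
      _ ≤ ∑ i, γ i * mhat i ^ β := Finset.sum_le_sum (fun i _ => h1 i)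
  -- upper bound on optimal reward
  have hup : (∑ i, γ i ^ c) ^ (1 - β) ≤ S ^ (1 - β) + N * ε := by
    have h1 : (∑ i, γ i ^ c) ^ (1 - β) ≤ (∑ i, (γhat i + ε) ^ c) ^ (1 - β) := by
      have hsum : (∑ i, γ i ^ c) ≤ ∑ i, (γhat i + ε) ^ c := by
        apply Finset.sum_le_sum
        intro i _
        have := abs_le.mp (hclose i)
        exact Real.rpow_le_rpow (hγ i).1 (by linarith [this.2]) hcpos.le
      exact Real.rpow_le_rpow (Finset.sum_nonneg fun i _ =>
        Real.rpow_nonneg (hγ i).1 c) hsum h1β.le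
    have h2 : (∑ i, (γhat i + ε) ^ c) ^ (1 - β)
        ≤ S ^ (1 - β) + (∑ _i : Fin N, ε ^ c) ^ (1 - β) := by
      have hβc : (1 - β) = 1 / c := by
        rw [hc, one_div_one_div]
      rw [hβc]
      exact Real.Lp_add_le_of_nonneg Finset.univ hc1
        (fun i _ => hγhat0 i) (fun i _ => hε)
    have h3 : (∑ _i : Fin N, ε ^ c) ^ (1 - β) ≤ N * ε := by
      have : (∑ _i : Fin N, ε ^ c) = N * ε ^ c := by
        rw [Finset.sum_const, card_univ, Fintype.card_fin, nsmul_eq_mul]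
      rw [this, Real.mul_rpow (Nat.cast_nonneg N) (Real.rpow_nonneg hε c),
        ← Real.rpow_mul hε, hc1β, Real.rpow_one]
      have hN1 : (1:ℝ) ≤ (N:ℝ) := by exact_mod_cast hN
      have : (N:ℝ) ^ (1 - β) ≤ (N:ℝ) ^ (1:ℝ) :=
        Real.rpow_le_rpow_of_exponent_le hN1 (by linarith)
      rw [Real.rpow_one] at this
      exact mul_le_mul_of_nonneg_right this hε
    linarith
  linarith
end

section
/- Consider the FETE algorithm with N ≥ 1 threads, shared exponent β ∈ (0,1), true parameters γ ∈ [0,1]^N with γ ≠ 0, horizon T, and exploration fraction ξ ∈ (0,1) such that ξT is a positive integer. During rounds t = 1, …, ξT every thread receives allocation 1/N and thread i's rewards s_{t,i} ∈ [0,1] are independent with E[s_{t,i}] = γ_i (1/N)^β; at time ξT the estimate γ̂_i = N^β·(1/(ξT))·∑_{t=1}^{ξT} s_{t,i} is formed, and during rounds t = ξT+1, …, T the plug-in allocation m̂_i = γ̂_i^{1/(1-β)}/∑_j γ̂_j^{1/(1-β)} is used (whenever γ̂ ≠ 0, γ̂_i ≥ 0). Then for any δ ∈ (0,1), with probability at least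 1 − Nδ, the cumulative expected regret R = ∑_{t=1}^T (‖γ‖_{1/(1-β)} − ρ(γ, m_t)) satisfies R ≤ ξTN + √2 · N^{1+β} · (1/√ξ) · √T · √(ln(2/δ)). -/
open Finset MeasureTheory
open scoped ProbabilityTheory

open ProbabilityTheory

open Real

lemma hoeff_core {p : ℝ} (hp0 : 0 ≤ p) (hp1 : p ≤ 1) (t : ℝ) :
    1 - p + p * exp t ≤ exp (p * t + t ^ 2 / 8) := by
  set h : ℝ → ℝ := fun u => 1 - p + p * exp u with hh
  have hpos : ∀ u, 0 < h u := by
    intro u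
    have e : h u = 1 - p + p * exp u := rfl
    rw [e]
    rcases le_or_gt (exp u) 1 with hc | hc
    · have := exp_pos u; nlinarith
    · nlinarith
  set g : ℝ → ℝ := fun u => p * u + u ^ 2 / 8 - Real.log (h u) with hg
  set g' : ℝ → ℝ := fun u => p + u / 4 - p * exp u / h u with hg'
  have hd : ∀ u, HasDerivAt g (g' u) u := by
    intro u
    have h1 : HasDerivAt h (p * exp u) u := by
      exact ((Real.hasDerivAt_exp u).const_mul p).const_add (1 - p)
    have h2 : HasDerivAt (fun u => Real.log (h u)) (p * exp u / h u) u :=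
      h1.log (hpos u).ne'
    have h4 : HasDerivAt (fun u : ℝ => p * u) p u := by
      simpa using (hasDerivAt_id u).const_mul p
    have h5 : HasDerivAt (fun u : ℝ => u ^ 2 / 8) (u / 4) u := by
      exact ((hasDerivAt_pow 2 u).div_const 8).congr_deriv (by rw [show (2:ℕ) - 1 = 1 from rfl]; push_cast; ring)
    exact (h4.add h5).sub h2
  have hd' : ∀ u, HasDerivAt g'
      (1 / 4 - (p * exp u * h u - p * exp u * (p * exp u)) / (h u) ^ 2) u := by
    intro u
    have h1 : HasDerivAt h (p * exp u) u := by
      exact ((Real.hasDerivAt_exp u).const_mul p).const_add (1 - p)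
    have h2 : HasDerivAt (fun u => p * exp u) (p * exp u) u :=
      (Real.hasDerivAt_exp u).const_mul p
    have h3 : HasDerivAt (fun u => p * exp u / h u)
        ((p * exp u * h u - p * exp u * (p * exp u)) / (h u) ^ 2) u := by
      exact h2.div h1 (hpos u).ne'
    have h4 : HasDerivAt (fun u : ℝ => p + u / 4) (1 / 4) u := by
      simpa using ((hasDerivAt_id u).div_const 4).const_add p
    exact h4.sub h3
  have hmono : Monotone g' := by
    apply monotone_of_deriv_nonneg (fun u => (hd' u).differentiableAt)
    intro u
    rw [(hd' u).deriv, sub_nonneg, div_le_iff₀ (pow_pos (hpos u) 2)]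
    have e : h u = 1 - p + p * exp u := rfl
    rw [e]
    nlinarith [sq_nonneg (1 - p - p * exp u), exp_pos u]
  have hg'0 : g' 0 = 0 := by simp [g', h]
  have hgdiff : Differentiable ℝ g := fun u => (hd u).differentiableAt
  have hg0 : g 0 = 0 := by simp [g, h]
  have hkey : 0 ≤ g t := by
    rcases le_or_gt 0 t with hu | hu
    · have hm : MonotoneOn g (Set.Ici 0) := by
        apply monotoneOn_of_deriv_nonneg (convex_Ici 0)
          hgdiff.continuous.continuousOn hgdiff.differentiableOn
        intro x hx
        rw [interior_Ici] at hx
        rw [(hd x).deriv, ← hg'0]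
        exact hmono (le_of_lt hx)
      have := hm (Set.self_mem_Ici) (by exact hu) hu
      linarith [hg0 ▸ this]
    · have hm : AntitoneOn g (Set.Iic 0) := by
        apply antitoneOn_of_deriv_nonpos (convex_Iic 0)
          hgdiff.continuous.continuousOn hgdiff.differentiableOn
        intro x hx
        rw [interior_Iic] at hx
        rw [(hd x).deriv, ← hg'0]
        exact hmono (le_of_lt hx)
      have := hm (le_of_lt hu : t ∈ Set.Iic 0) (Set.self_mem_Iic) (le_of_lt hu)
      linarith [hg0 ▸ this]
  have hlog : Real.log (h t) ≤ p * t + t ^ 2 / 8 := by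
    simp only [g] at hkey; linarith
  calc 1 - p + p * exp t = h t := rfl
    _ = exp (Real.log (h t)) := (Real.exp_log (hpos t)).symm
    _ ≤ exp (p * t + t ^ 2 / 8) := exp_le_exp.2 hlog


lemma mgf_le_hoeff {Ω : Type*} [MeasureSpace Ω] [IsProbabilityMeasure (ℙ : Measure Ω)]
    {X : Ω → ℝ} (hX : Measurable X) (hb : ∀ᵐ ω, X ω ∈ Set.Icc (0:ℝ) 1)
    {m : ℝ} (hm : (∫ ω, X ω) = m) (l : ℝ) :
    mgf X ℙ l ≤ exp (l * m + l ^ 2 / 8) := by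
  have hint : Integrable X ℙ := by
    refine (integrable_const 1).mono' hX.aestronglyMeasurable ?_
    filter_upwards [hb] with ω h
    rw [Real.norm_eq_abs, abs_le]
    exact ⟨by linarith [h.1], h.2⟩
  have hm0 : 0 ≤ m := hm ▸ integral_nonneg_of_ae (hb.mono fun ω h => h.1)
  have hm1 : m ≤ 1 := by
    rw [← hm]
    calc (∫ ω, X ω) ≤ ∫ _ω, (1:ℝ) :=
          integral_mono_ae hint (integrable_const 1) (hb.mono fun ω h => h.2)
      _ = 1 := by simp
  have hintE : Integrable (fun ω => exp (l * X ω)) ℙ := by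
    refine (integrable_const (exp |l|)).mono' ((hX.const_mul l).exp).aestronglyMeasurable ?_
    filter_upwards [hb] with ω h
    rw [Real.norm_eq_abs, abs_exp, exp_le_exp]
    calc l * X ω ≤ |l * X ω| := le_abs_self _
      _ = |l| * |X ω| := abs_mul _ _
      _ ≤ |l| * 1 := by
          apply mul_le_mul_of_nonneg_left _ (abs_nonneg l)
          rw [abs_le]; exact ⟨by linarith [h.1], h.2⟩
      _ = |l| := mul_one _
  have hint2 : Integrable (fun ω => 1 - X ω + X ω * exp l) ℙ :=
    ((integrable_const 1).sub hint).add (hint.mul_const _)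
  have step1 : mgf X ℙ l ≤ 1 - m + m * exp l := by
    have : mgf X ℙ l ≤ ∫ ω, (1 - X ω + X ω * exp l) := by
      refine integral_mono_ae hintE hint2 ?_
      filter_upwards [hb] with ω h
      have := convexOn_exp.2 (Set.mem_univ (0:ℝ)) (Set.mem_univ l)
        (by linarith [h.2] : 0 ≤ 1 - X ω) h.1 (by ring)
      simp only [smul_eq_mul, mul_zero, zero_add, exp_zero, mul_one] at this
      calc exp (l * X ω) = exp (X ω * l) := by rw [mul_comm]
        _ ≤ (1 - X ω) + X ω * exp l := this
        _ = 1 - X ω + X ω * exp l := by ring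
    have i1 : Integrable (fun ω => 1 - X ω) ℙ := (integrable_const 1).sub hint
    rw [integral_add i1 (hint.mul_const _),
      integral_sub (integrable_const 1) hint, integral_mul_const, hm] at this
    simpa using this
  calc mgf X ℙ l ≤ 1 - m + m * exp l := step1
    _ ≤ exp (m * l + l ^ 2 / 8) := hoeff_core hm0 hm1 l
    _ = exp (l * m + l ^ 2 / 8) := by rw [mul_comm m l]

lemma hoeff_tail {Ω : Type*} [MeasureSpace Ω] [IsProbabilityMeasure (ℙ : Measure Ω)]
    (n : ℕ) (hn : 0 < n) (Y : Fin n → Ω → ℝ) (hmeas : ∀ t, Measurable (Y t))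
    (hind : ProbabilityTheory.iIndepFun Y ℙ)
    (hb : ∀ t, ∀ᵐ ω, Y t ω ∈ Set.Icc (0:ℝ) 1)
    (m : Fin n → ℝ) (hm : ∀ t, (∫ ω, Y t ω) = m t)
    (a : ℝ) (ha : 0 < a) :
    (ℙ {ω | (∑ t, m t) + a ≤ ∑ t, Y t ω}).toReal ≤ exp (-(2 * a ^ 2 / n)) := by
  have hnR : (0:ℝ) < n := by exact_mod_cast hn
  set l : ℝ := 4 * a / n with hl_def
  have hl : 0 < l := by positivity
  have hmeasS : Measurable (∑ t, Y t) := by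
    rw [show (∑ t, Y t) = fun ω => ∑ t, Y t ω from by ext ω; simp]
    exact Finset.measurable_sum _ fun t _ => hmeas t
  have hball : ∀ᵐ ω, ∀ t, Y t ω ∈ Set.Icc (0:ℝ) 1 := ae_all_iff.2 hb
  have hintE : Integrable (fun ω => exp (l * (∑ t, Y t) ω)) ℙ := by
    refine (integrable_const (exp (l * n))).mono'
      ((hmeasS.const_mul l).exp).aestronglyMeasurable ?_
    filter_upwards [hball] with ω h
    rw [Real.norm_eq_abs, abs_exp, exp_le_exp]
    apply mul_le_mul_of_nonneg_left _ hl.le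
    calc (∑ t, Y t) ω = ∑ t, Y t ω := by simp [Finset.sum_apply]
      _ ≤ ∑ _t : Fin n, (1:ℝ) := Finset.sum_le_sum fun t _ => (h t).2
      _ = n := by simp
  have chern := measure_ge_le_exp_mul_mgf (μ := ℙ) (X := ∑ t, Y t)
    ((∑ t, m t) + a) hl.le hintE
  have hmgf : mgf (∑ t, Y t) ℙ l ≤ exp (l * (∑ t, m t) + n * (l ^ 2 / 8)) := by
    rw [hind.mgf_sum hmeas Finset.univ]
    calc ∏ t, mgf (Y t) ℙ l ≤ ∏ t, exp (l * m t + l ^ 2 / 8) :=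
          Finset.prod_le_prod (fun t _ => mgf_nonneg)
            (fun t _ => mgf_le_hoeff (hmeas t) (hb t) (hm t) l)
      _ = exp (∑ t : Fin n, (l * m t + l ^ 2 / 8)) := (Real.exp_sum _ _).symm
      _ = exp (l * (∑ t, m t) + n * (l ^ 2 / 8)) := by
          rw [Finset.sum_add_distrib, Finset.mul_sum, Finset.sum_const, Finset.card_univ]
          simp [nsmul_eq_mul]
  have hset : {ω | (∑ t, m t) + a ≤ ∑ t, Y t ω} = {ω | (∑ t, m t) + a ≤ (∑ t, Y t) ω} := by
    ext ω; simp [Finset.sum_apply]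
  rw [hset]
  calc (ℙ {ω | (∑ t, m t) + a ≤ (∑ t, Y t) ω}).toReal
      ≤ exp (-l * ((∑ t, m t) + a)) * mgf (∑ t, Y t) ℙ l := chern
    _ ≤ exp (-l * ((∑ t, m t) + a)) * exp (l * (∑ t, m t) + n * (l ^ 2 / 8)) := by
        apply mul_le_mul_of_nonneg_left hmgf (exp_pos _).le
    _ = exp (-l * ((∑ t, m t) + a) + (l * (∑ t, m t) + n * (l ^ 2 / 8))) := (exp_add _ _).symm
    _ = exp (-(2 * a ^ 2 / n)) := by
        congr 1
        rw [hl_def]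
        field_simp
        ring

lemma iIndepFun_precomp {Ω ι ι' : Type*} [MeasurableSpace Ω] {μ : Measure Ω} {f : ι → Ω → ℝ}
    (h : ProbabilityTheory.iIndepFun f μ)
    (g : ι' → ι) (hg : Function.Injective g) :
    ProbabilityTheory.iIndepFun (fun j => f (g j)) μ := by
  classical
  rw [ProbabilityTheory.iIndepFun_iff_measure_inter_preimage_eq_mul] at h ⊢
  intro S sets hsets
  rcases S.eq_empty_or_nonempty with rfl | hS
  · simpa using h ∅ (sets := fun _ => Set.univ) (by simp)
  · haveI : Nonempty ι' := ⟨hS.choose⟩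
    set g' := Function.invFun g with hg'
    have hgg : ∀ j, g' (g j) = j := Function.leftInverse_invFun hg
    have := h (S.image g) (sets := fun i => sets (g' i)) ?_
    · have e1 : (⋂ i ∈ S.image g, f i ⁻¹' sets (g' i)) = ⋂ j ∈ S, f (g j) ⁻¹' sets j := by
        ext ω
        simp only [Set.mem_iInter]
        constructor
        · intro H j hj
          have := H (g j) (Finset.mem_image_of_mem g hj)
          rwa [hgg j] at this
        · intro H i hi
          rcases Finset.mem_image.1 hi with ⟨j, hj, rfl⟩
          rw [hgg j]
          exact H j hj
      have e2 : (∏ i ∈ S.image g, μ (f i ⁻¹' sets (g' i))) = ∏ j ∈ S, μ (f (g j) ⁻¹' sets j) := by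
        rw [Finset.prod_image (fun x _ y _ hxy => hg hxy)]
        exact Finset.prod_congr rfl fun j hj => by rw [hgg j]
      rw [e1, e2] at this
      exact this
    · intro i hi
      rcases Finset.mem_image.1 hi with ⟨j, hj, rfl⟩
      simpa only [hgg j] using hsets j hj

lemma fete_det (N : ℕ) (hN : 1 ≤ N) (β : ℝ) (hβ0 : 0 < β) (hβ1 : β < 1)
    (γ g : Fin N → ℝ) (hγ : ∀ i, γ i ∈ Set.Icc (0:ℝ) 1) (hg : ∀ i, 0 ≤ g i)
    (ε : ℝ) (hε : 0 ≤ ε) (hclose : ∀ i, |g i - γ i| ≤ ε) :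
    (∑ i, γ i ^ (1/(1-β))) ^ (1-β)
      - ∑ i, γ i * ((g i ^ (1/(1-β)) / ∑ j, g j ^ (1/(1-β))) ^ β) ≤ 2 * N * ε := by
  have h1β : (0:ℝ) < 1 - β := by linarith
  set q : ℝ := 1 / (1 - β) with hqdef
  have hqpos : 0 < q := by positivity
  have hq1 : 1 ≤ q := by
    rw [hqdef, le_div_iff₀ h1β]; linarith
  have hq : q * (1 - β) = 1 := by
    rw [hqdef]; field_simp
  have hq' : 1 + q * β = q := by
    have : q * (1 - β) = 1 := hq
    nlinarith
  have hinv : 1 / q = 1 - β := by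
    rw [hqdef, one_div_one_div]
  set S : ℝ := ∑ j, g j ^ q with hSdef
  have hS0 : 0 ≤ S := Finset.sum_nonneg fun j _ => rpow_nonneg (hg j) q
  -- m i bounds
  have hm0 : ∀ i, 0 ≤ g i ^ q / S := fun i => div_nonneg (rpow_nonneg (hg i) q) hS0
  have hm1 : ∀ i, g i ^ q / S ≤ 1 := by
    intro i
    rcases eq_or_lt_of_le hS0 with hS | hS
    · have : ∀ j, g j ^ q = 0 := by
        intro j
        have := (Finset.sum_eq_zero_iff_of_nonneg
          (fun j _ => rpow_nonneg (hg j) q)).1 hS.symm j (Finset.mem_univ j)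
        exact this
      rw [this i, zero_div]; norm_num
    · rw [div_le_one hS]
      exact Finset.single_le_sum (fun j _ => rpow_nonneg (hg j) q) (Finset.mem_univ i)
  have hmβ0 : ∀ i, 0 ≤ (g i ^ q / S) ^ β := fun i => rpow_nonneg (hm0 i) β
  have hmβ1 : ∀ i, (g i ^ q / S) ^ β ≤ 1 := fun i => rpow_le_one (hm0 i) (hm1 i) hβ0.le
  -- Claim A : ∑ g i * m i ^ β = S ^ (1 - β)
  have claimA : ∑ i, g i * (g i ^ q / S) ^ β = S ^ (1 - β) := by
    rcases eq_or_lt_of_le hS0 with hS | hS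
    · have hz : ∀ j, g j = 0 := by
        intro j
        have h0 := (Finset.sum_eq_zero_iff_of_nonneg
          (fun j _ => rpow_nonneg (hg j) q)).1 hS.symm j (Finset.mem_univ j)
        exact (Real.rpow_eq_zero (hg j) (ne_of_gt hqpos)).1 h0
      rw [← hS, Real.zero_rpow (ne_of_gt h1β)]
      apply Finset.sum_eq_zero
      intro i _
      rw [hz i, zero_mul]
    · have : ∀ i, g i * (g i ^ q / S) ^ β = g i ^ q / S ^ β := by
        intro i
        rw [Real.div_rpow (rpow_nonneg (hg i) q) hS0, ← Real.rpow_mul (hg i) q β]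
        rw [show g i * (g i ^ (q * β) / S ^ β) = g i ^ (1:ℝ) * g i ^ (q * β) / S ^ β by
          rw [Real.rpow_one]; ring]
        rw [← Real.rpow_add' (hg i) (by rw [hq']; positivity), hq']
      rw [Finset.sum_congr rfl fun i _ => this i, ← Finset.sum_div, ← hSdef,
        show S / S ^ β = S ^ (1:ℝ) / S ^ β by rw [Real.rpow_one],
        ← Real.rpow_sub hS]
  -- lower bound on exploit reward
  have hlow : S ^ (1 - β) - N * ε ≤ ∑ i, γ i * (g i ^ q / S) ^ β := by
    have h1 : ∀ i, (g i - ε) * (g i ^ q / S) ^ β ≤ γ i * (g i ^ q / S) ^ β := by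
      intro i
      apply mul_le_mul_of_nonneg_right _ (hmβ0 i)
      have := abs_le.1 (hclose i)
      linarith [this.1]
    calc S ^ (1 - β) - N * ε
        = ∑ i, g i * (g i ^ q / S) ^ β - N * ε := by rw [claimA]
      _ ≤ ∑ i, g i * (g i ^ q / S) ^ β - ε * ∑ i, (g i ^ q / S) ^ β := by
          have : ∑ i, (g i ^ q / S) ^ β ≤ N := by
            calc ∑ i, (g i ^ q / S) ^ β ≤ ∑ _i : Fin N, (1:ℝ) :=
                  Finset.sum_le_sum fun i _ => hmβ1 i
              _ = N := by simp
          nlinarith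
      _ = ∑ i, (g i - ε) * (g i ^ q / S) ^ β := by
          rw [Finset.mul_sum, ← Finset.sum_sub_distrib]
          apply Finset.sum_congr rfl
          intro i _; ring
      _ ≤ ∑ i, γ i * (g i ^ q / S) ^ β := Finset.sum_le_sum fun i _ => h1 i
  -- upper bound on optimum
  have hup : (∑ i, γ i ^ q) ^ (1 - β) ≤ S ^ (1 - β) + N * ε := by
    have h1 : ∑ i, γ i ^ q ≤ ∑ i, (g i + ε) ^ q := by
      apply Finset.sum_le_sum
      intro i _
      apply Real.rpow_le_rpow (hγ i).1 _ hqpos.le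
      have := abs_le.1 (hclose i)
      linarith [this.1]
    have h2 : (∑ i, (g i + ε) ^ q) ^ (1/q) ≤
        (∑ i, g i ^ q) ^ (1/q) + (∑ _i : Fin N, ε ^ q) ^ (1/q) :=
      Real.Lp_add_le_of_nonneg (f := g) (g := fun _ => ε) Finset.univ hq1
        (fun i _ => hg i) (fun i _ => hε)
    rw [hinv] at h2
    have h3 : (∑ _i : Fin N, ε ^ q) ^ (1 - β) ≤ N * ε := by
      rw [Finset.sum_const, Finset.card_univ, Fintype.card_fin, nsmul_eq_mul,
        Real.mul_rpow (Nat.cast_nonneg N) (rpow_nonneg hε q)]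
      have e1 : (ε ^ q) ^ (1 - β) = ε := by
        rw [← Real.rpow_mul hε, hq, Real.rpow_one]
      have e2 : (N:ℝ) ^ (1 - β) ≤ N := by
        calc (N:ℝ) ^ (1 - β) ≤ (N:ℝ) ^ (1:ℝ) :=
              Real.rpow_le_rpow_of_exponent_le (by exact_mod_cast hN) (by linarith)
          _ = N := Real.rpow_one _
      rw [e1]
      exact mul_le_mul_of_nonneg_right e2 hε
    calc (∑ i, γ i ^ q) ^ (1 - β) ≤ (∑ i, (g i + ε) ^ q) ^ (1 - β) :=
          Real.rpow_le_rpow (Finset.sum_nonneg fun i _ => rpow_nonneg (hγ i).1 q) h1 h1β.le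
      _ ≤ (∑ i, g i ^ q) ^ (1 - β) + (∑ _i : Fin N, ε ^ q) ^ (1 - β) := h2
      _ ≤ S ^ (1 - β) + N * ε := add_le_add le_rfl h3
  linarith

/-- Theorem 1 of the paper (regret of the FETE algorithm): with `N` threads,
shared exponent `β ∈ (0,1)`, true parameters `γ ∈ [0,1]^N`, `γ ≠ 0`, horizon
`T`, exploration fraction `ξ ∈ (0,1)` with `ξT = t0` a positive integer,
uniform allocation `1/N` and independent rewards `s_{t,i} ∈ [0,1]` with mean
`γ_i (1/N)^β` during exploration, estimates
`γ̂_i = N^β (1/t0) ∑_t s_{t,i}` and plug-in allocation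
`m̂_i = γ̂_i^{1/(1-β)}/∑_j γ̂_j^{1/(1-β)}` during exploitation, the cumulative
expected regret `R = ∑_{t=1}^T (‖γ‖_{1/(1-β)} − ρ(γ, m_t))` satisfies, with
probability at least `1 − Nδ`,
`R ≤ ξTN + √2 · N^{1+β} · ξ^{-1/2} · √T · √(ln(2/δ))`. -/
theorem stmt13 {Ω : Type*} [MeasureSpace Ω] [IsProbabilityMeasure (ℙ : Measure Ω)]
    (N : ℕ) (hN : 1 ≤ N) (β : ℝ) (hβ : β ∈ Set.Ioo (0 : ℝ) 1)
    (γ : Fin N → ℝ) (hγ : ∀ i, γ i ∈ Set.Icc (0 : ℝ) 1) (hγne : γ ≠ 0)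
    (T t0 : ℕ) (ξ : ℝ) (hξ : ξ ∈ Set.Ioo (0 : ℝ) 1)
    (ht0 : 0 < t0) (ht0T : (t0 : ℝ) = ξ * T)
    (s : Fin t0 → Fin N → Ω → ℝ)
    (hmeas : ∀ t i, Measurable (s t i))
    (hindep : ProbabilityTheory.iIndepFun
      (fun p : Fin t0 × Fin N => s p.1 p.2) ℙ)
    (hbdd : ∀ t i, ∀ᵐ ω, s t i ω ∈ Set.Icc (0 : ℝ) 1)
    (hmean : ∀ t i, (∫ ω, s t i ω) = γ i * ((1 : ℝ) / N) ^ β)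
    (γhat : Fin N → Ω → ℝ)
    (hγhat : ∀ i ω, γhat i ω = (N : ℝ) ^ β * ((1 : ℝ) / t0) * ∑ t, s t i ω)
    (mhat : Ω → Fin N → ℝ)
    (hmhat : ∀ ω i, mhat ω i = γhat i ω ^ (1 / (1 - β)) / ∑ j, γhat j ω ^ (1 / (1 - β)))
    (R : Ω → ℝ)
    (hR : ∀ ω, R ω =
        (t0 : ℝ) * ((∑ i, γ i ^ (1 / (1 - β))) ^ (1 - β) - ∑ i, γ i * ((1 : ℝ) / N) ^ β)
        + ((T : ℝ) - t0) *
          ((∑ i, γ i ^ (1 / (1 - β))) ^ (1 - β) - ∑ i, γ i * (mhat ω i) ^ β))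
    (δ : ℝ) (hδ : δ ∈ Set.Ioo (0 : ℝ) 1) :
    1 - N * δ ≤
      (ℙ {ω | R ω ≤ ξ * T * N +
        Real.sqrt 2 * (N : ℝ) ^ (1 + β) * (1 / Real.sqrt ξ) * Real.sqrt T *
          Real.sqrt (Real.log (2 / δ))}).toReal := by
  obtain ⟨hβ0, hβ1⟩ := hβ
  obtain ⟨hξ0, hξ1⟩ := hξ
  obtain ⟨hδ0, hδ1⟩ := hδ
  have hNR : (0:ℝ) < N := by exact_mod_cast hN
  have ht0R : (0:ℝ) < t0 := by exact_mod_cast ht0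
  have hT1 : (t0:ℝ) ≤ T := by
    rw [ht0T]
    nlinarith [hξ1, (Nat.cast_nonneg T : (0:ℝ) ≤ T)]
  have hTR : (0:ℝ) < T := lt_of_lt_of_le ht0R hT1
  have hlog : 0 < Real.log (2/δ) :=
    Real.log_pos (by rw [lt_div_iff₀ hδ0]; linarith)
  set B : ℝ := (N:ℝ) ^ β with hBdef
  have hB : 0 < B := Real.rpow_pos_of_pos hNR β
  have hBinv : ((1:ℝ)/N) ^ β = B⁻¹ := by
    rw [one_div, Real.inv_rpow hNR.le]
  set w : ℝ := Real.sqrt (Real.log (2/δ) / (2 * t0)) with hwdef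
  have hw : 0 < w := Real.sqrt_pos.2 (by positivity)
  set ε : ℝ := B * w with hεdef
  have hε : 0 < ε := mul_pos hB hw
  set a : ℝ := (t0:ℝ) * w with hadef
  have ha : 0 < a := mul_pos ht0R hw
  have hsint : ∀ t i, Integrable (s t i) ℙ := by
    intro t i
    refine (integrable_const 1).mono' (hmeas t i).aestronglyMeasurable ?_
    filter_upwards [hbdd t i] with ω h
    rw [Real.norm_eq_abs, abs_le]
    exact ⟨by linarith [h.1], h.2⟩
  -- the tail bound value
  have hexp_eq : Real.exp (-(2 * a ^ 2 / t0)) = δ / 2 := by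
    have h1 : a ^ 2 = (t0:ℝ) * Real.log (2/δ) / 2 := by
      rw [hadef, mul_pow, Real.sq_sqrt (by positivity : (0:ℝ) ≤ Real.log (2/δ) / (2 * t0))]
      field_simp
    rw [h1, show -(2 * ((t0:ℝ) * Real.log (2/δ) / 2) / t0) = -Real.log (2/δ) by
      field_simp, Real.exp_neg, Real.exp_log (by positivity : (0:ℝ) < 2/δ), inv_div]
  -- per-thread deviation bound
  have hγhat_meas : ∀ i, Measurable (γhat i) := by
    intro i
    have : γhat i = fun ω => (N:ℝ) ^ β * ((1:ℝ)/t0) * ∑ t, s t i ω := funext fun ω => hγhat i ω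
    rw [this]
    exact (Finset.measurable_sum _ fun t _ => hmeas t i).const_mul _
  have hbadP : ∀ i, (ℙ {ω | ε < |γhat i ω - γ i|}).toReal ≤ δ := by
    intro i
    set c : ℝ := γ i * ((1:ℝ)/N) ^ β with hcdef
    have hindi : ProbabilityTheory.iIndepFun (fun t => s t i) ℙ :=
      iIndepFun_precomp hindep (fun t => (t, i)) (fun x y hxy => (Prod.mk.injEq _ _ _ _ ▸ hxy : _ ∧ _).1)
    have hU : (ℙ {ω | (∑ _t : Fin t0, c) + a ≤ ∑ t, s t i ω}).toReal ≤
        Real.exp (-(2 * a ^ 2 / t0)) :=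
      hoeff_tail t0 ht0 (fun t => s t i) (fun t => hmeas t i) hindi
        (fun t => hbdd t i) (fun _ => c) (fun t => hmean t i) a ha
    have hindi' : ProbabilityTheory.iIndepFun
        (fun t => (fun x : ℝ => 1 - x) ∘ (s t i)) ℙ :=
      ProbabilityTheory.iIndepFun.comp hindi _ (fun t => measurable_const.sub measurable_id)
    have hL : (ℙ {ω | (∑ _t : Fin t0, (1 - c)) + a ≤ ∑ t, (1 - s t i ω)}).toReal ≤
        Real.exp (-(2 * a ^ 2 / t0)) := by
      refine hoeff_tail t0 ht0 (fun t ω => 1 - s t i ω)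
        (fun t => measurable_const.sub (hmeas t i)) hindi'
        (fun t => by
          filter_upwards [hbdd t i] with ω h
          exact ⟨by linarith [h.2], by linarith [h.1]⟩)
        (fun _ => 1 - c)
        (fun t => by
          rw [integral_sub (integrable_const 1) (hsint t i), hmean t i, hcdef]
          simp) a ha
    have hsub : {ω | ε < |γhat i ω - γ i|} ⊆
        {ω | (∑ _t : Fin t0, c) + a ≤ ∑ t, s t i ω} ∪
        {ω | (∑ _t : Fin t0, (1 - c)) + a ≤ ∑ t, (1 - s t i ω)} := by
      intro ω hω
      simp only [Set.mem_setOf_eq] at hω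
      rw [hγhat i ω] at hω
      set Sm : ℝ := ∑ t, s t i ω with hSm
      have hsum1 : (∑ _t : Fin t0, c) = (t0:ℝ) * c := by
        rw [Finset.sum_const, Finset.card_univ, Fintype.card_fin, nsmul_eq_mul]
      have hsum2 : (∑ t, (1 - s t i ω)) = (t0:ℝ) - Sm := by
        rw [Finset.sum_sub_distrib, Finset.sum_const, Finset.card_univ, Fintype.card_fin,
          nsmul_eq_mul, mul_one, hSm]
      have hμB : c = γ i * B⁻¹ := by rw [hcdef, hBinv]
      rcases lt_abs.1 hω with hω1 | hω1
      · left
        simp only [Set.mem_setOf_eq]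
        rw [hsum1, hμB]
        have h2 : (t0:ℝ)/B * (γ i + B * w) < (t0:ℝ)/B * (B * ((1:ℝ)/t0) * Sm) := by
          apply mul_lt_mul_of_pos_left _ (by positivity)
          rw [hεdef] at hω1
          linarith
        have e1 : (t0:ℝ)/B * (B * ((1:ℝ)/t0) * Sm) = Sm := by
          field_simp
        have e2 : (t0:ℝ)/B * (γ i + B * w) = (t0:ℝ) * (γ i * B⁻¹) + (t0:ℝ) * w := by
          field_simp
        rw [e1, e2] at h2
        rw [hadef]
        linarith
      · right
        simp only [Set.mem_setOf_eq]
        rw [hsum2]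
        have hsum3 : (∑ _t : Fin t0, (1 - c)) = (t0:ℝ) * (1 - c) := by
          rw [Finset.sum_const, Finset.card_univ, Fintype.card_fin, nsmul_eq_mul]
        rw [hsum3, hμB]
        have h2 : (t0:ℝ)/B * (B * ((1:ℝ)/t0) * Sm) < (t0:ℝ)/B * (γ i - B * w) := by
          apply mul_lt_mul_of_pos_left _ (by positivity)
          rw [hεdef] at hω1
          linarith
        have e1 : (t0:ℝ)/B * (B * ((1:ℝ)/t0) * Sm) = Sm := by
          field_simp
        have e2 : (t0:ℝ)/B * (γ i - B * w) = (t0:ℝ) * (γ i * B⁻¹) - (t0:ℝ) * w := by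
          field_simp
        rw [e1, e2] at h2
        rw [hadef]
        linarith
    calc (ℙ {ω | ε < |γhat i ω - γ i|}).toReal
        ≤ (ℙ ({ω | (∑ _t : Fin t0, c) + a ≤ ∑ t, s t i ω} ∪
            {ω | (∑ _t : Fin t0, (1 - c)) + a ≤ ∑ t, (1 - s t i ω)})).toReal :=
          ENNReal.toReal_mono (measure_ne_top _ _) (measure_mono hsub)
      _ ≤ ((ℙ {ω | (∑ _t : Fin t0, c) + a ≤ ∑ t, s t i ω}) +
            (ℙ {ω | (∑ _t : Fin t0, (1 - c)) + a ≤ ∑ t, (1 - s t i ω)})).toReal :=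
          ENNReal.toReal_mono
            (ENNReal.add_ne_top.2 ⟨measure_ne_top _ _, measure_ne_top _ _⟩)
            (measure_union_le _ _)
      _ = (ℙ {ω | (∑ _t : Fin t0, c) + a ≤ ∑ t, s t i ω}).toReal +
            (ℙ {ω | (∑ _t : Fin t0, (1 - c)) + a ≤ ∑ t, (1 - s t i ω)}).toReal :=
          ENNReal.toReal_add (measure_ne_top _ _) (measure_ne_top _ _)
      _ ≤ Real.exp (-(2 * a ^ 2 / t0)) + Real.exp (-(2 * a ^ 2 / t0)) := add_le_add hU hL
      _ = δ := by rw [hexp_eq]; ring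
  -- the good event
  set G : Set Ω := ⋂ (t : Fin t0), ⋂ (i : Fin N), (s t i) ⁻¹' (Set.Icc (0:ℝ) 1) with hGdef
  have hGmeas : MeasurableSet G :=
    MeasurableSet.iInter fun t => MeasurableSet.iInter fun i => (hmeas t i) measurableSet_Icc
  have hGc : ℙ Gᶜ = 0 := by
    have hGae : ∀ᵐ ω, ω ∈ G := by
      have := ae_all_iff.2 fun t : Fin t0 => ae_all_iff.2 fun i : Fin N => hbdd t i
      filter_upwards [this] with ω h
      simp only [hGdef, Set.mem_iInter, Set.mem_preimage]
      exact fun t i => h t i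
    exact ae_iff.1 hGae
  set bd : Fin N → Set Ω := fun i => {ω | ε < |γhat i ω - γ i|} with hbddef
  have hbdmeas : ∀ i, MeasurableSet (bd i) := by
    intro i
    exact measurableSet_lt measurable_const ((hγhat_meas i).sub measurable_const).abs
  set good : Set Ω := G ∩ (⋃ i, bd i)ᶜ with hgooddef
  have hgoodmeas : MeasurableSet good :=
    hGmeas.inter (MeasurableSet.iUnion hbdmeas).compl
  have hgoodP : 1 - N * δ ≤ (ℙ good).toReal := by
    have hcompl : goodᶜ = Gᶜ ∪ (⋃ i, bd i) := by
      rw [hgooddef, Set.compl_inter, compl_compl]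
    have h1 : ℙ goodᶜ ≤ ∑ i, ℙ (bd i) := by
      rw [hcompl]
      calc ℙ (Gᶜ ∪ ⋃ i, bd i) ≤ ℙ Gᶜ + ℙ (⋃ i, bd i) := measure_union_le _ _
        _ = ℙ (⋃ i, bd i) := by rw [hGc, zero_add]
        _ ≤ ∑' i, ℙ (bd i) := measure_iUnion_le _
        _ = ∑ i, ℙ (bd i) := tsum_fintype _
    have h2 : (ℙ goodᶜ).toReal ≤ N * δ := by
      calc (ℙ goodᶜ).toReal ≤ (∑ i, ℙ (bd i)).toReal :=
            ENNReal.toReal_mono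
              (ENNReal.sum_lt_top.2 fun i _ => measure_lt_top _ _).ne h1
        _ = ∑ i, (ℙ (bd i)).toReal := ENNReal.toReal_sum fun i _ => measure_ne_top _ _
        _ ≤ ∑ _i : Fin N, δ := Finset.sum_le_sum fun i _ => hbadP i
        _ = N * δ := by rw [Finset.sum_const, Finset.card_univ, Fintype.card_fin, nsmul_eq_mul]
    have h3 := prob_add_prob_compl (μ := ℙ) hgoodmeas
    have h4 : (ℙ good).toReal + (ℙ goodᶜ).toReal = 1 := by
      rw [← ENNReal.toReal_add (measure_ne_top _ _) (measure_ne_top _ _), h3]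
      simp
    linarith
  -- good event implies the regret bound
  have hincl : good ⊆ {ω | R ω ≤ ξ * T * N +
      Real.sqrt 2 * (N : ℝ) ^ (1 + β) * (1 / Real.sqrt ξ) * Real.sqrt T *
        Real.sqrt (Real.log (2 / δ))} := by
    intro ω hωmem
    obtain ⟨hωG, hωb⟩ := hωmem
    have hωs : ∀ t i, s t i ω ∈ Set.Icc (0:ℝ) 1 := by
      intro t i
      have := hωG
      simp only [hGdef, Set.mem_iInter, Set.mem_preimage] at this
      exact this t i
    have hclose : ∀ i, |γhat i ω - γ i| ≤ ε := by
      intro i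
      by_contra hcon
      apply hωb
      exact Set.mem_iUnion.2 ⟨i, not_le.1 hcon⟩
    have hgnn : ∀ i, 0 ≤ γhat i ω := by
      intro i
      rw [hγhat i ω]
      apply mul_nonneg (mul_nonneg (Real.rpow_nonneg hNR.le β) (by positivity))
      exact Finset.sum_nonneg fun t _ => (hωs t i).1
    have hkey := fete_det N hN β hβ0 hβ1 γ (fun i => γhat i ω) hγ hgnn ε hε.le hclose
    have hmrw : (∑ i, γ i * (mhat ω i) ^ β) =
        ∑ i, γ i * ((γhat i ω ^ (1/(1-β)) / ∑ j, γhat j ω ^ (1/(1-β))) ^ β) :=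
      Finset.sum_congr rfl fun i _ => by rw [hmhat ω i]
    have hexploit : (∑ i, γ i ^ (1/(1-β))) ^ (1-β) - ∑ i, γ i * (mhat ω i) ^ β
        ≤ 2 * N * ε := by
      rw [hmrw]
      exact hkey
    have hopt : (∑ i, γ i ^ (1/(1-β))) ^ (1-β) ≤ N := by
      have h1 : ∑ i, γ i ^ (1/(1-β)) ≤ (N:ℝ) := by
        calc ∑ i, γ i ^ (1/(1-β)) ≤ ∑ _i : Fin N, (1:ℝ) :=
              Finset.sum_le_sum fun i _ =>
                Real.rpow_le_one (hγ i).1 (hγ i).2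
                  (by have h1b : (0:ℝ) < 1 - β := by linarith
                      positivity)
          _ = N := by simp
      calc (∑ i, γ i ^ (1/(1-β))) ^ (1-β) ≤ (N:ℝ) ^ (1-β) :=
            Real.rpow_le_rpow (Finset.sum_nonneg fun i _ =>
              Real.rpow_nonneg (hγ i).1 _) h1 (by linarith)
        _ ≤ (N:ℝ) ^ (1:ℝ) :=
            Real.rpow_le_rpow_of_exponent_le (by exact_mod_cast hN) (by linarith)
        _ = N := Real.rpow_one _
    have hexplore : 0 ≤ ∑ i, γ i * ((1:ℝ)/N) ^ β :=
      Finset.sum_nonneg fun i _ => mul_nonneg (hγ i).1 (Real.rpow_nonneg (by positivity) β)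
    -- final numeric bound
    have hwe : w = Real.sqrt (Real.log (2/δ)) /
        (Real.sqrt 2 * (Real.sqrt ξ * Real.sqrt T)) := by
      rw [hwdef, ht0T, Real.sqrt_div hlog.le, Real.sqrt_mul (by norm_num : (0:ℝ) ≤ 2),
        Real.sqrt_mul hξ0.le]
    have hfinal : (T:ℝ) * (2 * N * ε) =
        Real.sqrt 2 * (N : ℝ) ^ (1 + β) * (1 / Real.sqrt ξ) * Real.sqrt T *
          Real.sqrt (Real.log (2 / δ)) := by
      rw [hεdef, hwe, Real.rpow_add hNR, Real.rpow_one, ← hBdef]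
      set L := Real.sqrt (Real.log (2/δ)) with hL
      set z := Real.sqrt 2 with hz
      set u := Real.sqrt ξ with hu
      set v := Real.sqrt T with hv
      have hvv : v * v = (T:ℝ) := Real.mul_self_sqrt (Nat.cast_nonneg T)
      have hww : z * z = 2 := Real.mul_self_sqrt (by norm_num)
      have hus : (0:ℝ) < u := Real.sqrt_pos.2 hξ0
      have hvs : (0:ℝ) < v := Real.sqrt_pos.2 hTR
      have hzs : (0:ℝ) < z := Real.sqrt_pos.2 (by norm_num)
      rw [← hvv, ← hww]
      field_simp
    rw [Set.mem_setOf_eq, hR ω]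
    have step1 : (t0:ℝ) * ((∑ i, γ i ^ (1/(1-β))) ^ (1-β) - ∑ i, γ i * ((1:ℝ)/N) ^ β)
        ≤ (t0:ℝ) * N :=
      mul_le_mul_of_nonneg_left (by linarith) ht0R.le
    have step2 : ((T:ℝ) - t0) *
        ((∑ i, γ i ^ (1/(1-β))) ^ (1-β) - ∑ i, γ i * (mhat ω i) ^ β)
        ≤ (T:ℝ) * (2 * N * ε) := by
      calc ((T:ℝ) - t0) * ((∑ i, γ i ^ (1/(1-β))) ^ (1-β) - ∑ i, γ i * (mhat ω i) ^ β)
          ≤ ((T:ℝ) - t0) * (2 * N * ε) :=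
            mul_le_mul_of_nonneg_left hexploit (by linarith)
        _ ≤ (T:ℝ) * (2 * N * ε) := by
            apply mul_le_mul_of_nonneg_right (by linarith) (by positivity)
    have : (t0:ℝ) * N = ξ * T * N := by rw [ht0T]
    linarith [hfinal ▸ step2]
  calc 1 - N * δ ≤ (ℙ good).toReal := hgoodP
    _ ≤ _ := ENNReal.toReal_mono (measure_ne_top _ _) (measure_mono hincl)
end
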